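/- arXiv:1506.02246 — 2 statements merged into one kernel-verified Lean document; each statement's English description precedes it below -/
import Mathlib

section
/- The set of periods of periodic points of f_α equals {2^k : k ≥ 0}; i.e., f_α is a map of type 2^∞, and every periodic point of period 2^k lies in X_k \ X_{k+1}. -/
noncomputable def kfin (α : ℝ) {k : ℕ} (u : Fin k → Bool) : ℝ :=
  (1 - α) * ∑ i : Fin k, (if u i then α ^ (i : ℕ) else 0)

noncomputable def fDel (α : ℝ) (x : ℝ) : ℝ :=
  if x = 1 then 0
  else
    let j := sInf {n : ℕ | x < 1 - α ^ n}
    if x ≤ 1 - α ^ (j - 1) + α ^ j then x - 1 + 2 * α ^ (j - 1) - α ^ j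
    else (1 - α + α ^ 2) / (2 * α - 1) * (x - 1) + α ^ (j + 1) * (2 - α) / (2 * α - 1)

def Xk (α : ℝ) (k : ℕ) : Set ℝ :=
  ⋃ u : Fin k → Bool, Set.Icc (kfin α u) (kfin α u + α ^ k)

lemma fDel_one (α : ℝ) : fDel α 1 = 0 := if_pos rfl

lemma fDel_eq_of {α : ℝ} (hα1 : 0 < α) (hα2 : α < 1 / 2) {x : ℝ} {i : ℕ}
    (h1 : 1 - α ^ i ≤ x) (h2 : x < 1 - α ^ (i + 1)) :
    fDel α x = if x ≤ 1 - α ^ i + α ^ (i + 1) then x - 1 + 2 * α ^ i - α ^ (i + 1)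
      else (1 - α + α ^ 2) / (2 * α - 1) * (x - 1) + α ^ (i + 2) * (2 - α) / (2 * α - 1) := by
  have hx1 : x ≠ 1 := by nlinarith [pow_pos hα1 (i + 1)]
  have hsinf : sInf {n : ℕ | x < 1 - α ^ n} = i + 1 := by
    apply le_antisymm
    · exact Nat.sInf_le h2
    · apply le_csInf ⟨i + 1, h2⟩
      intro n hn
      by_contra hlt
      push_neg at hlt
      have hle : α ^ i ≤ α ^ n :=
        pow_le_pow_of_le_one hα1.le (by linarith) (Nat.lt_succ_iff.mp hlt)
      have : x < 1 - α ^ n := hn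
      linarith
  unfold fDel
  rw [if_neg hx1]
  simp only [hsinf, Nat.add_sub_cancel]

lemma exists_band {α : ℝ} (hα1 : 0 < α) (hα2 : α < 1 / 2) {z : ℝ}
    (h0 : 0 ≤ z) (h1 : z < 1) : ∃ i : ℕ, 1 - α ^ i ≤ z ∧ z < 1 - α ^ (i + 1) := by
  have hne : {n : ℕ | z < 1 - α ^ n}.Nonempty := by
    obtain ⟨n, hn⟩ := exists_pow_lt_of_lt_one (by linarith : (0:ℝ) < 1 - z) (by linarith : α < 1)
    exact ⟨n, by simpa using by linarith⟩
  have hj0 : sInf {n : ℕ | z < 1 - α ^ n} ≠ 0 := by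
    intro h
    have hmem := Nat.sInf_mem hne
    rw [h] at hmem
    simp only [Set.mem_setOf_eq, pow_zero] at hmem
    linarith
  obtain ⟨i, hi⟩ := Nat.exists_eq_succ_of_ne_zero hj0
  have hnot : i ∉ {n : ℕ | z < 1 - α ^ n} :=
    Nat.notMem_of_lt_sInf (by omega : i < sInf {n : ℕ | z < 1 - α ^ n})
  refine ⟨i, not_lt.mp hnot, ?_⟩
  have hmem := Nat.sInf_mem hne
  rw [hi] at hmem
  exact hmem
lemma fDel_scale {α : ℝ} (hα1 : 0 < α) (hα2 : α < 1 / 2) {z : ℝ}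
    (hz : z ∈ Set.Icc (0:ℝ) 1) : fDel α (α * z) = 1 - α + α * z := by
  obtain ⟨hz0, hz1⟩ := hz
  have h1 : 1 - α ^ 0 ≤ α * z := by simp; positivity
  have h2 : α * z < 1 - α ^ (0 + 1) := by
    have : α * z ≤ α := by nlinarith
    simp only [zero_add, pow_one]; linarith
  rw [fDel_eq_of hα1 hα2 h1 h2, if_pos (by simp only [pow_zero, zero_add, pow_one]; nlinarith)]
  simp only [pow_zero, zero_add, pow_one]; ring

lemma fDel_mid {α : ℝ} (hα1 : 0 < α) (hα2 : α < 1 / 2) {x : ℝ}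
    (h1 : α < x) (h2 : x < 1 - α) :
    fDel α x = (1 - α + α ^ 2) / (2 * α - 1) * (x - 1) + α ^ 2 * (2 - α) / (2 * α - 1) := by
  have hb1 : 1 - α ^ 0 ≤ x := by simp only [pow_zero]; linarith
  have hb2 : x < 1 - α ^ (0 + 1) := by simp only [zero_add, pow_one]; linarith
  rw [fDel_eq_of hα1 hα2 hb1 hb2,
    if_neg (by simp only [pow_zero, zero_add, pow_one]; intro h; linarith)]

lemma fDel_shift {α : ℝ} (hα1 : 0 < α) (hα2 : α < 1 / 2) {z : ℝ}
    (hz : z ∈ Set.Icc (0:ℝ) 1) : fDel α (1 - α + α * z) = α * fDel α z := by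
  obtain ⟨hz0, hz1⟩ := hz
  rcases eq_or_lt_of_le hz1 with h | h
  · subst h
    rw [show (1:ℝ) - α + α * 1 = 1 by ring, fDel_one, mul_zero]
  · obtain ⟨i, hi1, hi2⟩ := exists_band hα1 hα2 hz0 h
    rw [fDel_eq_of hα1 hα2 hi1 hi2]
    have hp1 : α * (1 - α ^ i) ≤ α * z := mul_le_mul_of_nonneg_left hi1 hα1.le
    have hp2 : α * z < α * (1 - α ^ (i + 1)) := (mul_lt_mul_iff_right₀ hα1).mpr hi2
    have key1 : 1 - α ^ (i + 1) ≤ 1 - α + α * z := by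
      have : α ^ (i + 1) = α * α ^ i := by ring
      linarith
    have key2 : 1 - α + α * z < 1 - α ^ (i + 1 + 1) := by
      have : α ^ (i + 1 + 1) = α * α ^ (i + 1) := by ring
      linarith
    rw [fDel_eq_of hα1 hα2 key1 key2]
    by_cases hc : z ≤ 1 - α ^ i + α ^ (i + 1)
    · rw [if_pos hc, if_pos (by
        have : α * z ≤ α * (1 - α ^ i + α ^ (i + 1)) := mul_le_mul_of_nonneg_left hc hα1.le
        have h1 : α * (1 - α ^ i + α ^ (i + 1)) = α - α ^ (i + 1) + α ^ (i + 1 + 1) := by ring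
        linarith)]
      ring
    · push_neg at hc
      have hgt : 1 - α ^ (i + 1) + α ^ (i + 1 + 1) < 1 - α + α * z := by
        have h5 : α * (1 - α ^ i + α ^ (i + 1)) < α * z := (mul_lt_mul_iff_right₀ hα1).mpr hc
        have h6 : α * (1 - α ^ i + α ^ (i + 1)) = α - α ^ (i + 1) + α ^ (i + 1 + 1) := by ring
        linarith
      rw [if_neg (not_le.mpr hgt), if_neg (not_le.mpr hc)]
      ring

lemma fDel_mem {α : ℝ} (hα1 : 0 < α) (hα2 : α < 1 / 2) {x : ℝ}
    (hx : x ∈ Set.Icc (0:ℝ) 1) : fDel α x ∈ Set.Icc (0:ℝ) 1 := by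
  obtain ⟨hx0, hx1⟩ := hx
  rcases eq_or_lt_of_le hx1 with h | h
  · subst h; rw [fDel_one]; constructor <;> norm_num
  · obtain ⟨i, hi1, hi2⟩ := exists_band hα1 hα2 hx0 h
    rw [fDel_eq_of hα1 hα2 hi1 hi2]
    have hpi : 0 < α ^ i := pow_pos hα1 i
    have hpi1 : α ^ (i + 1) = α * α ^ i := by ring
    have hple : α ^ i ≤ 1 := pow_le_one₀ hα1.le (by linarith)
    split_ifs with hc
    · constructor <;> nlinarith
    · push_neg at hc
      have hD : 2 * α - 1 < 0 := by linarith
      have hrw : (1 - α + α ^ 2) / (2 * α - 1) * (x - 1) + α ^ (i + 2) * (2 - α) / (2 * α - 1)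
          = ((1 - α + α ^ 2) * (x - 1) + α ^ (i + 2) * (2 - α)) / (2 * α - 1) := by ring
      rw [hrw]
      have hnum : (1 - α + α ^ 2) * (x - 1) + α ^ (i + 2) * (2 - α) ≤ 0 := by
        have hx' : x - 1 ≤ -α ^ (i + 1) := by linarith
        have h3 : (1 - α + α ^ 2) * (x - 1) ≤ (1 - α + α ^ 2) * (-α ^ (i + 1)) :=
          mul_le_mul_of_nonneg_left hx' (by nlinarith)
        have h4 : (1 - α + α ^ 2) * (-α ^ (i + 1)) + α ^ (i + 2) * (2 - α)
            = -(α ^ (i + 1) * ((1 - α) * (1 - 2 * α))) := by ring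
        have h5 : 0 ≤ α ^ (i + 1) * ((1 - α) * (1 - 2 * α)) :=
          mul_nonneg (pow_pos hα1 (i + 1)).le
            (mul_nonneg (by linarith) (by linarith))
        linarith
      constructor
      · exact div_nonneg_of_nonpos hnum hD.le
      · rw [div_le_iff_of_neg hD]
        have hx' : -α ^ i + α ^ (i + 1) ≤ x - 1 := by linarith
        have h3 : (1 - α + α ^ 2) * (-α ^ i + α ^ (i + 1)) ≤ (1 - α + α ^ 2) * (x - 1) :=
          mul_le_mul_of_nonneg_left hx' (by nlinarith)
        have h4 : (1 - α + α ^ 2) * (-α ^ i + α ^ (i + 1)) + α ^ (i + 2) * (2 - α)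
            = α ^ i * (2 * α - 1) := by ring
        nlinarith
open Function Set

lemma iter_mem {α : ℝ} (hα1 : 0 < α) (hα2 : α < 1 / 2) {x : ℝ}
    (hx : x ∈ Set.Icc (0:ℝ) 1) (n : ℕ) : (fDel α)^[n] x ∈ Set.Icc (0:ℝ) 1 := by
  induction n with
  | zero => simpa
  | succ n ih => rw [Function.iterate_succ_apply']; exact fDel_mem hα1 hα2 ih

lemma left_formula {α : ℝ} (hα1 : 0 < α) (hα2 : α < 1 / 2) {x : ℝ}
    (hx : x ∈ Set.Icc (0:ℝ) α) : fDel α x = 1 - α + x := by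
  have hz : x / α ∈ Set.Icc (0:ℝ) 1 := ⟨div_nonneg hx.1 hα1.le, (div_le_one hα1).mpr hx.2⟩
  have h := fDel_scale hα1 hα2 hz
  rwa [mul_div_cancel₀ _ (ne_of_gt hα1)] at h

lemma h01 {α : ℝ} (hα1 : 0 < α) (hα2 : α < 1 / 2) {x : ℝ}
    (hx : x ∈ Set.Icc (0:ℝ) α) : fDel α x ∈ Set.Icc (1 - α) 1 := by
  rw [left_formula hα1 hα2 hx]
  exact ⟨by linarith [hx.1], by linarith [hx.2]⟩

lemma right_formula {α : ℝ} (hα1 : 0 < α) (hα2 : α < 1 / 2) {x : ℝ}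
    (hx : x ∈ Set.Icc (1 - α) 1) : fDel α x = α * fDel α ((x - (1 - α)) / α) := by
  have hz : (x - (1 - α)) / α ∈ Set.Icc (0:ℝ) 1 :=
    ⟨div_nonneg (by linarith [hx.1]) hα1.le, (div_le_one hα1).mpr (by linarith [hx.2])⟩
  have h := fDel_shift hα1 hα2 hz
  rwa [mul_div_cancel₀ _ (ne_of_gt hα1), show 1 - α + (x - (1 - α)) = x by ring] at h

lemma h10 {α : ℝ} (hα1 : 0 < α) (hα2 : α < 1 / 2) {x : ℝ}
    (hx : x ∈ Set.Icc (1 - α) 1) : fDel α x ∈ Set.Icc (0:ℝ) α := by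
  rw [right_formula hα1 hα2 hx]
  have hz : (x - (1 - α)) / α ∈ Set.Icc (0:ℝ) 1 :=
    ⟨div_nonneg (by linarith [hx.1]) hα1.le, (div_le_one hα1).mpr (by linarith [hx.2])⟩
  have hm := fDel_mem hα1 hα2 hz
  exact ⟨mul_nonneg hα1.le hm.1, by nlinarith [hm.2]⟩

lemma iter_conj_left {α : ℝ} (hα1 : 0 < α) (hα2 : α < 1 / 2) {z : ℝ}
    (hz : z ∈ Set.Icc (0:ℝ) 1) (n : ℕ) :
    (fDel α)^[2 * n] (α * z) = α * (fDel α)^[n] z := by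
  induction n generalizing z with
  | zero => simp
  | succ n ih =>
    rw [show 2 * (n + 1) = 2 * n + 2 by ring, Function.iterate_add_apply]
    have h2 : (fDel α)^[2] (α * z) = α * fDel α z := by
      rw [show (2:ℕ) = 1 + 1 from rfl, Function.iterate_add_apply]
      simp only [Function.iterate_one]
      rw [fDel_scale hα1 hα2 hz, fDel_shift hα1 hα2 hz]
    rw [h2, ih (fDel_mem hα1 hα2 hz), ← Function.iterate_succ_apply]

lemma iter_conj_right {α : ℝ} (hα1 : 0 < α) (hα2 : α < 1 / 2) {z : ℝ}
    (hz : z ∈ Set.Icc (0:ℝ) 1) (n : ℕ) :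
    (fDel α)^[2 * n] (1 - α + α * z) = 1 - α + α * (fDel α)^[n] z := by
  induction n generalizing z with
  | zero => simp
  | succ n ih =>
    rw [show 2 * (n + 1) = 2 * n + 2 by ring, Function.iterate_add_apply]
    have h2 : (fDel α)^[2] (1 - α + α * z) = 1 - α + α * fDel α z := by
      rw [show (2:ℕ) = 1 + 1 from rfl, Function.iterate_add_apply]
      simp only [Function.iterate_one]
      rw [fDel_shift hα1 hα2 hz, fDel_scale hα1 hα2 (fDel_mem hα1 hα2 hz)]
    rw [h2, ih (fDel_mem hα1 hα2 hz), ← Function.iterate_succ_apply]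

lemma minper_conj_left {α : ℝ} (hα1 : 0 < α) (hα2 : α < 1 / 2) {z : ℝ}
    (hz : z ∈ Set.Icc (0:ℝ) 1) :
    Function.minimalPeriod ((fDel α)^[2]) (α * z) = Function.minimalPeriod (fDel α) z := by
  rw [Function.minimalPeriod_eq_minimalPeriod_iff]
  intro n
  unfold Function.IsPeriodicPt Function.IsFixedPt
  rw [← Function.iterate_mul, iter_conj_left hα1 hα2 hz n]
  exact mul_right_inj' (ne_of_gt hα1)

lemma minper_conj_right {α : ℝ} (hα1 : 0 < α) (hα2 : α < 1 / 2) {z : ℝ}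
    (hz : z ∈ Set.Icc (0:ℝ) 1) :
    Function.minimalPeriod ((fDel α)^[2]) (1 - α + α * z) = Function.minimalPeriod (fDel α) z := by
  rw [Function.minimalPeriod_eq_minimalPeriod_iff]
  intro n
  unfold Function.IsPeriodicPt Function.IsFixedPt
  rw [← Function.iterate_mul, iter_conj_right hα1 hα2 hz n]
  rw [add_right_inj]
  exact mul_right_inj' (ne_of_gt hα1)

lemma alt_left {α : ℝ} (hα1 : 0 < α) (hα2 : α < 1 / 2) {x : ℝ}
    (hx : x ∈ Set.Icc (0:ℝ) α) (n : ℕ) :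
    (fDel α)^[2 * n] x ∈ Set.Icc (0:ℝ) α ∧ (fDel α)^[2 * n + 1] x ∈ Set.Icc (1 - α) 1 := by
  induction n with
  | zero => exact ⟨by simpa using hx, by simpa using h01 hα1 hα2 hx⟩
  | succ n ih =>
    have he : (fDel α)^[2 * (n + 1)] x ∈ Set.Icc (0:ℝ) α := by
      rw [show 2 * (n + 1) = (2 * n + 1) + 1 by ring, Function.iterate_succ_apply']
      exact h10 hα1 hα2 ih.2
    refine ⟨he, ?_⟩
    rw [Function.iterate_succ_apply']
    exact h01 hα1 hα2 he

lemma alt_right {α : ℝ} (hα1 : 0 < α) (hα2 : α < 1 / 2) {x : ℝ}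
    (hx : x ∈ Set.Icc (1 - α) 1) (n : ℕ) :
    (fDel α)^[2 * n] x ∈ Set.Icc (1 - α) 1 ∧ (fDel α)^[2 * n + 1] x ∈ Set.Icc (0:ℝ) α := by
  induction n with
  | zero => exact ⟨by simpa using hx, by simpa using h10 hα1 hα2 hx⟩
  | succ n ih =>
    have he : (fDel α)^[2 * (n + 1)] x ∈ Set.Icc (1 - α) 1 := by
      rw [show 2 * (n + 1) = (2 * n + 1) + 1 by ring, Function.iterate_succ_apply']
      exact h01 hα1 hα2 ih.2
    refine ⟨he, ?_⟩
    rw [Function.iterate_succ_apply']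
    exact h10 hα1 hα2 he

lemma even_minper {α : ℝ} (hα1 : 0 < α) (hα2 : α < 1 / 2) {x : ℝ}
    (hx : x ∈ Set.Icc (0:ℝ) α ∪ Set.Icc (1 - α) 1) :
    Even (Function.minimalPeriod (fDel α) x) := by
  rcases Nat.even_or_odd (Function.minimalPeriod (fDel α) x) with he | ho
  · exact he
  · exfalso
    have hn := Function.isPeriodicPt_minimalPeriod (fDel α) x
    obtain ⟨t, ht⟩ := ho
    rcases hx with hl | hr
    · have := (alt_left hα1 hα2 hl t).2
      rw [← ht, hn] at this
      have := this.1
      have h2 := hl.2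
      linarith
    · have := (alt_right hα1 hα2 hr t).2
      rw [← ht, hn] at this
      have := this.2
      have h2 := hr.1
      linarith

lemma double_minper {α : ℝ} (hα1 : 0 < α) (hα2 : α < 1 / 2) {x : ℝ}
    (hx : x ∈ Set.Icc (0:ℝ) α ∪ Set.Icc (1 - α) 1)
    (hper : x ∈ Function.periodicPts (fDel α)) :
    Function.minimalPeriod (fDel α) x = 2 * Function.minimalPeriod ((fDel α)^[2]) x := by
  rw [Function.minimalPeriod_iterate_eq_div_gcd' hper]
  obtain ⟨t, ht⟩ := even_minper hα1 hα2 (x := x) hx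
  have h2 : 2 ∣ Function.minimalPeriod (fDel α) x := ⟨t, by omega⟩
  rw [Nat.gcd_comm, Nat.gcd_eq_left h2]
  omega
noncomputable def pfix (α : ℝ) : ℝ := (1 - α ^ 2) / (2 - α)

lemma pfix_mem {α : ℝ} (hα1 : 0 < α) (hα2 : α < 1 / 2) :
    α < pfix α ∧ pfix α < 1 - α := by
  have h2 : (0:ℝ) < 2 - α := by linarith
  constructor
  · rw [pfix, lt_div_iff₀ h2]; nlinarith
  · rw [pfix, div_lt_iff₀ h2]; nlinarith

lemma pfix_fixed {α : ℝ} (hα1 : 0 < α) (hα2 : α < 1 / 2) : fDel α (pfix α) = pfix α := by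
  obtain ⟨h1, h2⟩ := pfix_mem hα1 hα2
  rw [fDel_mid hα1 hα2 h1 h2, pfix]
  have hd1 : (2:ℝ) * α - 1 ≠ 0 := by intro h; nlinarith
  have hd2 : (2:ℝ) - α ≠ 0 := by intro h; nlinarith
  field_simp
  rw [div_eq_iff (by intro h; nlinarith)]
  ring

lemma pfix_mem01 {α : ℝ} (hα1 : 0 < α) (hα2 : α < 1 / 2) : pfix α ∈ Set.Icc (0:ℝ) 1 := by
  obtain ⟨h1, h2⟩ := pfix_mem hα1 hα2
  exact ⟨by linarith, by linarith⟩

lemma mid_eq_pfix {α : ℝ} (hα1 : 0 < α) (hα2 : α < 1 / 2) {x : ℝ}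
    (hx : x ∈ Set.Icc (0:ℝ) 1) (h1 : α < x) (h2 : x < 1 - α)
    (hper : x ∈ Function.periodicPts (fDel α)) : x = pfix α := by
  obtain ⟨n, hn, hnx⟩ := hper
  -- the orbit stays in the middle interval
  have horb : ∀ i : ℕ, α < (fDel α)^[i] x ∧ (fDel α)^[i] x < 1 - α := by
    intro i
    by_contra hcon
    push_neg at hcon
    have hmem : (fDel α)^[i] x ∈ Set.Icc (0:ℝ) 1 := iter_mem hα1 hα2 hx i
    have hX : (fDel α)^[i] x ∈ Set.Icc (0:ℝ) α ∪ Set.Icc (1 - α) 1 := by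
      rcases le_or_gt ((fDel α)^[i] x) α with hle | hgt
      · exact Or.inl ⟨hmem.1, hle⟩
      · exact Or.inr ⟨hcon hgt, hmem.2⟩
    have hinv : ∀ t : ℕ, (fDel α)^[i + t] x ∈ Set.Icc (0:ℝ) α ∪ Set.Icc (1 - α) 1 := by
      intro t
      induction t with
      | zero => simpa using hX
      | succ t ih =>
        rw [show i + (t + 1) = (i + t) + 1 by ring, Function.iterate_succ_apply']
        rcases ih with hl | hr
        · exact Or.inr (h01 hα1 hα2 hl)
        · exact Or.inl (h10 hα1 hα2 hr)
    have hret : (fDel α)^[n * (i + 1)] x = x := (hnx.mul_const (i + 1))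
    have hge : i ≤ n * (i + 1) := by
      have := Nat.le_mul_of_pos_left (i + 1) hn
      omega
    obtain ⟨t, ht⟩ : ∃ t, n * (i + 1) = i + t := ⟨n * (i + 1) - i, by omega⟩
    have hxmem : x ∈ Set.Icc (0:ℝ) α ∪ Set.Icc (1 - α) 1 := by
      have := hinv t
      rw [← ht, hret] at this
      exact this
    rcases hxmem with hl | hr
    · linarith [hl.2]
    · linarith [hr.1]
  -- the fixed point equation for pfix in affine form
  have hpfix_aff : (1 - α + α ^ 2) / (2 * α - 1) * (pfix α - 1)
      + α ^ 2 * (2 - α) / (2 * α - 1) = pfix α := by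
    have := pfix_fixed hα1 hα2
    rwa [fDel_mid hα1 hα2 (pfix_mem hα1 hα2).1 (pfix_mem hα1 hα2).2] at this
  -- affine recursion
  have hrec : ∀ i : ℕ, (fDel α)^[i] x - pfix α
      = ((1 - α + α ^ 2) / (2 * α - 1)) ^ i * (x - pfix α) := by
    intro i
    induction i with
    | zero => simp
    | succ i ih =>
      rw [Function.iterate_succ_apply']
      have hoi := horb i
      rw [fDel_mid hα1 hα2 hoi.1 hoi.2]
      have key : (1 - α + α ^ 2) / (2 * α - 1) * ((fDel α)^[i] x - 1)
          + α ^ 2 * (2 - α) / (2 * α - 1) - pfix α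
          = (1 - α + α ^ 2) / (2 * α - 1) * ((fDel α)^[i] x - pfix α) := by
        linear_combination hpfix_aff
      have goal' : (1 - α + α ^ 2) / (2 * α - 1) * ((fDel α)^[i] x - 1)
          + α ^ 2 * (2 - α) / (2 * α - 1) - pfix α
          = ((1 - α + α ^ 2) / (2 * α - 1)) ^ (i + 1) * (x - pfix α) := by
        rw [key, ih, pow_succ]; ring
      linarith [goal']
  have hfin := hrec n
  rw [hnx] at hfin
  have hmlt : (1 - α + α ^ 2) / (2 * α - 1) < -1 := by
    rw [div_lt_iff_of_neg (by linarith : 2 * α - 1 < 0)]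
    nlinarith
  have hmn : ((1 - α + α ^ 2) / (2 * α - 1)) ^ n ≠ 1 := by
    intro h
    have habs : 1 < |(1 - α + α ^ 2) / (2 * α - 1)| := by
      rw [abs_of_neg (by linarith : (1 - α + α ^ 2) / (2 * α - 1) < 0)]; linarith
    have : 1 < |(1 - α + α ^ 2) / (2 * α - 1)| ^ n := one_lt_pow₀ habs (by omega)
    rw [← abs_pow, h] at this
    simp at this
  have h0 : (((1 - α + α ^ 2) / (2 * α - 1)) ^ n - 1) * (x - pfix α) = 0 := by
    linear_combination -hfin
  rcases mul_eq_zero.mp h0 with h | h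
  · exact absurd (by linarith : ((1 - α + α ^ 2) / (2 * α - 1)) ^ n = 1) hmn
  · linarith
lemma kfin_le {α : ℝ} (hα1 : 0 < α) (hα2 : α < 1 / 2) {k : ℕ} (u : Fin k → Bool) :
    0 ≤ kfin α u ∧ kfin α u ≤ 1 - α ^ k := by
  have h1 : (0:ℝ) ≤ 1 - α := by linarith
  constructor
  · apply mul_nonneg h1
    apply Finset.sum_nonneg
    intro i _
    split
    · positivity
    · exact le_refl 0
  · have hsum : ∑ i : Fin k, (if u i then α ^ (i:ℕ) else 0) ≤ ∑ i : Fin k, α ^ (i:ℕ) := by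
      apply Finset.sum_le_sum
      intro i _
      split
      · exact le_refl _
      · positivity
    have hgeo : (1 - α) * ∑ i : Fin k, α ^ (i:ℕ) = 1 - α ^ k := by
      rw [Fin.sum_univ_eq_sum_range (fun i => α ^ i) k]
      have := geom_sum_mul α k
      linarith [this]
    calc kfin α u ≤ (1 - α) * ∑ i : Fin k, α ^ (i:ℕ) :=
          mul_le_mul_of_nonneg_left hsum h1
      _ = 1 - α ^ k := hgeo

lemma Xk_subset {α : ℝ} (hα1 : 0 < α) (hα2 : α < 1 / 2) (k : ℕ) :
    Xk α k ⊆ Set.Icc (0:ℝ) 1 := by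
  intro x hx
  obtain ⟨u, hu⟩ := Set.mem_iUnion.mp hx
  obtain ⟨h1, h2⟩ := kfin_le hα1 hα2 u
  exact ⟨le_trans h1 hu.1, le_trans hu.2 (by linarith [pow_pos hα1 k, (kfin_le hα1 hα2 u).2])⟩

lemma kfin_cons {α : ℝ} {k : ℕ} (b : Bool) (u : Fin k → Bool) :
    kfin α (Fin.cons b u) = (if b then (1 - α) else 0) + α * kfin α u := by
  unfold kfin
  rw [Fin.sum_univ_succ, Fin.cons_zero]
  have hstep : ∀ i : Fin k,
      (if (Fin.cons b u : Fin (k+1) → Bool) i.succ then α ^ (i.succ.val) else 0)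
        = α * (if u i then α ^ i.val else 0) := by
    intro i
    rw [Fin.cons_succ, Fin.val_succ]
    split
    · rw [pow_succ]; ring
    · ring
  rw [Finset.sum_congr rfl (fun i _ => hstep i), ← Finset.mul_sum]
  cases b <;> simp <;> ring

lemma scale_memXk {α : ℝ} (hα1 : 0 < α) {k : ℕ} {y : ℝ} (hy : y ∈ Xk α k) :
    α * y ∈ Xk α (k + 1) := by
  obtain ⟨u, hu⟩ := Set.mem_iUnion.mp hy
  apply Set.mem_iUnion.mpr ⟨Fin.cons false u, ?_⟩
  rw [kfin_cons]
  simp only [Bool.false_eq_true, if_false, zero_add]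
  constructor
  · exact mul_le_mul_of_nonneg_left hu.1 hα1.le
  · have := mul_le_mul_of_nonneg_left hu.2 hα1.le
    have hp : α * (kfin α u + α ^ k) = α * kfin α u + α ^ (k + 1) := by ring
    linarith

lemma shift_memXk {α : ℝ} (hα1 : 0 < α) {k : ℕ} {y : ℝ} (hy : y ∈ Xk α k) :
    1 - α + α * y ∈ Xk α (k + 1) := by
  obtain ⟨u, hu⟩ := Set.mem_iUnion.mp hy
  apply Set.mem_iUnion.mpr ⟨Fin.cons true u, ?_⟩
  rw [kfin_cons, if_pos rfl]
  constructor
  · have := mul_le_mul_of_nonneg_left hu.1 hα1.le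
    linarith
  · have := mul_le_mul_of_nonneg_left hu.2 hα1.le
    have hp : α * (kfin α u + α ^ k) = α * kfin α u + α ^ (k + 1) := by ring
    linarith

lemma unscale_memXk {α : ℝ} (hα1 : 0 < α) (hα2 : α < 1 / 2) {k : ℕ} {z : ℝ}
    (hz : z ∈ Set.Icc (0:ℝ) 1) (h : α * z ∈ Xk α (k + 1)) : z ∈ Xk α k := by
  obtain ⟨u, hu⟩ := Set.mem_iUnion.mp h
  have hdec : kfin α u = (if u 0 then (1 - α) else 0) + α * kfin α (Fin.tail u) := by
    conv_lhs => rw [← Fin.cons_self_tail u]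
    rw [kfin_cons]
  cases hu0 : u 0 with
  | true =>
    rw [hdec, hu0, if_pos rfl] at hu
    have h1 := hu.1
    have h2 : α * z ≤ α := by nlinarith [hz.2]
    have h3 := (kfin_le hα1 hα2 (Fin.tail u)).1
    nlinarith
  | false =>
    rw [hdec, hu0] at hu
    simp only [Bool.false_eq_true, if_false, zero_add] at hu
    apply Set.mem_iUnion.mpr ⟨Fin.tail u, ?_⟩
    constructor
    · exact (mul_le_mul_iff_right₀ hα1).mp hu.1
    · have h2 := hu.2
      have hp : α * (kfin α (Fin.tail u) + α ^ k)
          = α * kfin α (Fin.tail u) + α ^ (k + 1) := by ring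
      exact (mul_le_mul_iff_right₀ hα1).mp (by linarith)

lemma unshift_memXk {α : ℝ} (hα1 : 0 < α) (hα2 : α < 1 / 2) {k : ℕ} {z : ℝ}
    (hz : z ∈ Set.Icc (0:ℝ) 1) (h : 1 - α + α * z ∈ Xk α (k + 1)) : z ∈ Xk α k := by
  obtain ⟨u, hu⟩ := Set.mem_iUnion.mp h
  have hdec : kfin α u = (if u 0 then (1 - α) else 0) + α * kfin α (Fin.tail u) := by
    conv_lhs => rw [← Fin.cons_self_tail u]
    rw [kfin_cons]
  cases hu0 : u 0 with
  | false =>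
    rw [hdec, hu0] at hu
    simp only [Bool.false_eq_true, if_false, zero_add] at hu
    exfalso
    have h2 := hu.2
    have h3 := (kfin_le hα1 hα2 (Fin.tail u)).2
    have h4 : (0:ℝ) ≤ α * z := mul_nonneg hα1.le hz.1
    have h5 := mul_le_mul_of_nonneg_left h3 hα1.le
    have h6 : α * (1 - α ^ k) + α ^ (k + 1) = α := by ring
    linarith
  | true =>
    rw [hdec, hu0, if_pos rfl] at hu
    apply Set.mem_iUnion.mpr ⟨Fin.tail u, ?_⟩
    constructor
    · exact (mul_le_mul_iff_right₀ hα1).mp (by linarith [hu.1])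
    · have h2 := hu.2
      have hp : α * (kfin α (Fin.tail u) + α ^ k)
          = α * kfin α (Fin.tail u) + α ^ (k + 1) := by ring
      exact (mul_le_mul_iff_right₀ hα1).mp (by linarith)

lemma memX0 {α : ℝ} {x : ℝ} (hx : x ∈ Set.Icc (0:ℝ) 1) : x ∈ Xk α 0 := by
  apply Set.mem_iUnion.mpr ⟨fun i => i.elim0, ?_⟩
  have : kfin α (fun i : Fin 0 => i.elim0) = 0 := by simp [kfin]
  rw [this]
  simpa using hx

lemma notmemX1 {α : ℝ} (hα1 : 0 < α) (hα2 : α < 1 / 2) {x : ℝ}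
    (h1 : α < x) (h2 : x < 1 - α) : x ∉ Xk α 1 := by
  intro h
  obtain ⟨u, hu⟩ := Set.mem_iUnion.mp h
  have hk : kfin α u = if u 0 then (1 - α) else 0 := by
    unfold kfin
    rw [Fin.sum_univ_one]
    cases h : u 0 <;> simp
  cases h0 : u 0 with
  | true => rw [hk, h0, if_pos rfl] at hu; linarith [hu.1]
  | false =>
    rw [hk, h0] at hu
    simp only [Bool.false_eq_true, if_false, zero_add, pow_one] at hu
    linarith [hu.2]
lemma minper_pow {α : ℝ} (hα1 : 0 < α) (hα2 : α < 1 / 2) (k : ℕ) :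
    α ^ k * pfix α ∈ Set.Icc (0:ℝ) 1 ∧
      Function.minimalPeriod (fDel α) (α ^ k * pfix α) = 2 ^ k := by
  induction k with
  | zero =>
    rw [pow_zero, one_mul, pow_zero]
    exact ⟨pfix_mem01 hα1 hα2,
      Function.minimalPeriod_eq_one_iff_isFixedPt.mpr (pfix_fixed hα1 hα2)⟩
  | succ k ih =>
    obtain ⟨hmem, hper⟩ := ih
    have hx : α ^ (k + 1) * pfix α = α * (α ^ k * pfix α) := by ring
    rw [hx]
    have h1 : Function.minimalPeriod ((fDel α)^[2]) (α * (α ^ k * pfix α)) = 2 ^ k := by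
      rw [minper_conj_left hα1 hα2 hmem, hper]
    have hxhalf : α * (α ^ k * pfix α) ∈ Set.Icc (0:ℝ) α :=
      ⟨mul_nonneg hα1.le hmem.1, by nlinarith [hmem.2]⟩
    have hxmem : α * (α ^ k * pfix α) ∈ Set.Icc (0:ℝ) 1 :=
      ⟨hxhalf.1, by linarith [hxhalf.2]⟩
    have hper2 : α * (α ^ k * pfix α) ∈ Function.periodicPts ((fDel α)^[2]) :=
      Function.minimalPeriod_pos_iff_mem_periodicPts.mp (by rw [h1]; positivity)
    obtain ⟨n, hn, hpn⟩ := hper2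
    have hperf : α * (α ^ k * pfix α) ∈ Function.periodicPts (fDel α) := by
      refine ⟨2 * n, by omega, ?_⟩
      unfold Function.IsPeriodicPt Function.IsFixedPt at hpn ⊢
      rw [Function.iterate_mul]
      exact hpn
    refine ⟨hxmem, ?_⟩
    rw [double_minper hα1 hα2 (Or.inl hxhalf) hperf, h1, pow_succ]
    ring

lemma main_ind {α : ℝ} (hα1 : 0 < α) (hα2 : α < 1 / 2) :
    ∀ n : ℕ, ∀ x ∈ Set.Icc (0:ℝ) 1,
      Function.minimalPeriod (fDel α) x = n → 0 < n →
      ∃ k : ℕ, n = 2 ^ k ∧ x ∈ Xk α k \ Xk α (k + 1) := by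
  intro n
  induction n using Nat.strong_induction_on with
  | _ n IH =>
    intro x hx hmin hpos
    have hper : x ∈ Function.periodicPts (fDel α) :=
      Function.minimalPeriod_pos_iff_mem_periodicPts.mp (by rw [hmin]; exact hpos)
    by_cases hmid : α < x ∧ x < 1 - α
    · have hxp : x = pfix α := mid_eq_pfix hα1 hα2 hx hmid.1 hmid.2 hper
      have h1 : n = 1 := by
        rw [← hmin, hxp]
        exact Function.minimalPeriod_eq_one_iff_isFixedPt.mpr (pfix_fixed hα1 hα2)
      refine ⟨0, by omega, memX0 hx, ?_⟩
      exact notmemX1 hα1 hα2 hmid.1 hmid.2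
    · have hX : x ∈ Set.Icc (0:ℝ) α ∪ Set.Icc (1 - α) 1 := by
        push_neg at hmid
        rcases le_or_gt x α with h | h
        · exact Or.inl ⟨hx.1, h⟩
        · exact Or.inr ⟨hmid h, hx.2⟩
      have hdou := double_minper hα1 hα2 hX hper
      have hqpos : 0 < Function.minimalPeriod ((fDel α)^[2]) x := by omega
      have hqlt : Function.minimalPeriod ((fDel α)^[2]) x < n := by omega
      rcases hX with hl | hr
      · have hzx : α * (x / α) = x := mul_div_cancel₀ x (ne_of_gt hα1)
        have hzmem : x / α ∈ Set.Icc (0:ℝ) 1 :=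
          ⟨div_nonneg hl.1 hα1.le, (div_le_one hα1).mpr hl.2⟩
        have hq : Function.minimalPeriod (fDel α) (x / α)
            = Function.minimalPeriod ((fDel α)^[2]) x := by
          conv_rhs => rw [← hzx]
          exact (minper_conj_left hα1 hα2 hzmem).symm
        obtain ⟨k, hk, hmemk, hnotk⟩ :=
          IH _ hqlt (x / α) hzmem (hq.trans rfl) hqpos
        refine ⟨k + 1, by rw [pow_succ]; omega, ?_, ?_⟩
        · rw [← hzx]; exact scale_memXk hα1 hmemk
        · intro hcon
          rw [← hzx] at hcon
          exact hnotk (unscale_memXk hα1 hα2 hzmem hcon)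
      · have hzx : 1 - α + α * ((x - (1 - α)) / α) = x := by
          rw [mul_div_cancel₀ _ (ne_of_gt hα1)]; ring
        have hzmem : (x - (1 - α)) / α ∈ Set.Icc (0:ℝ) 1 :=
          ⟨div_nonneg (by linarith [hr.1]) hα1.le,
            (div_le_one hα1).mpr (by linarith [hr.2])⟩
        have hq : Function.minimalPeriod (fDel α) ((x - (1 - α)) / α)
            = Function.minimalPeriod ((fDel α)^[2]) x := by
          conv_rhs => rw [← hzx]
          exact (minper_conj_right hα1 hα2 hzmem).symm
        obtain ⟨k, hk, hmemk, hnotk⟩ :=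
          IH _ hqlt ((x - (1 - α)) / α) hzmem (hq.trans rfl) hqpos
        refine ⟨k + 1, by rw [pow_succ]; omega, ?_, ?_⟩
        · rw [← hzx]; exact shift_memXk hα1 hmemk
        · intro hcon
          rw [← hzx] at hcon
          exact hnotk (unshift_memXk hα1 hα2 hzmem hcon)

/-- The set of periods of periodic points of `f_α` in `[0,1]` is exactly `{2^k : k ≥ 0}`
(`f_α` is of type `2^∞`), and every periodic point of period `2^k` lies in `X_k \ X_{k+1}`. -/
theorem stmt10 (α : ℝ) (hα1 : 0 < α) (hα2 : α < 1 / 2) :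
    ({n : ℕ | 0 < n ∧ ∃ x ∈ Set.Icc (0 : ℝ) 1, Function.minimalPeriod (fDel α) x = n} =
      {n : ℕ | ∃ k : ℕ, n = 2 ^ k}) ∧
    ∀ x ∈ Set.Icc (0 : ℝ) 1, ∀ k : ℕ,
      Function.minimalPeriod (fDel α) x = 2 ^ k → x ∈ Xk α k \ Xk α (k + 1) := by
  constructor
  · ext n
    simp only [Set.mem_setOf_eq]
    constructor
    · rintro ⟨hn, x, hx, hmin⟩
      obtain ⟨k, hk, _⟩ := main_ind hα1 hα2 n x hx hmin hn
      exact ⟨k, hk⟩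
    · rintro ⟨k, rfl⟩
      exact ⟨by positivity, α ^ k * pfix α, (minper_pow hα1 hα2 k).1,
        (minper_pow hα1 hα2 k).2⟩
  · intro x hx k hmin
    obtain ⟨k', hk', hmem⟩ := main_ind hα1 hα2 (2 ^ k) x hx hmin (by positivity)
    have hkk : k = k' := Nat.pow_right_injective (le_refl 2) hk'
    rwa [hkk]
end

section
/- If 1/3 < α < 1/2 and 0 < ε < 1, then there exist k > 0 and words u, v ∈ Σ^k such that ρ(u,v) ≤ ε and ρ_∞(u,v) > ε. -/
noncomputable def rhoW (α : ℝ) {k : ℕ} (u v : Fin k → Bool) : ℝ := |kfin α u - kfin α v|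

def odoF {k : ℕ} (u : Fin k → Bool) : Fin k → Bool :=
  fun n => if ∀ i < n, u i = true then !u n else u n

noncomputable def rhoInfW (α : ℝ) {k : ℕ} (u v : Fin k → Bool) : ℝ :=
  ⨆ n : ℕ, rhoW α (odoF^[n] u) (odoF^[n] v)

/-! ### Auxiliary machinery -/

/-- The word in `Σ^k` whose letters are the binary digits of `a`. -/
def W (k a : ℕ) : Fin k → Bool := fun i => a.testBit i

lemma testBit_incr (n : ℕ) : ∀ a : ℕ,
    (a + 1).testBit n = if (∀ i < n, a.testBit i = true) then !(a.testBit n) else a.testBit n := by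
  induction n with
  | zero =>
    intro a
    rw [if_pos (fun i hi => absurd hi (Nat.not_lt_zero i))]
    simp only [Nat.testBit_zero]
    rcases Nat.mod_two_eq_zero_or_one a with h | h <;>
      · have : (a + 1) % 2 = (a % 2 + 1) % 2 := by omega
        simp [this, h]
  | succ n ih =>
    intro a
    rcases Nat.mod_two_eq_zero_or_one a with h | h
    · have h2 : (a + 1) / 2 = a / 2 := by omega
      have hc : ¬(∀ i < n + 1, a.testBit i = true) := by
        intro hall
        have := hall 0 (Nat.succ_pos n)
        simp [Nat.testBit_zero, h] at this
      rw [if_neg hc, Nat.testBit_add_one, h2, Nat.testBit_div_two]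
    · have h2 : (a + 1) / 2 = a / 2 + 1 := by omega
      have h0 : a.testBit 0 = true := by simp [Nat.testBit_zero, h]
      rw [Nat.testBit_add_one, h2, ih (a / 2)]
      have hdiv : ∀ i, (a / 2).testBit i = a.testBit (i + 1) := fun i => Nat.testBit_div_two a i
      have hcond : (∀ i < n, (a / 2).testBit i = true) ↔ (∀ i < n + 1, a.testBit i = true) := by
        constructor
        · intro hall i hi
          rcases Nat.eq_zero_or_pos i with rfl | hpos
          · exact h0
          · obtain ⟨i', rfl⟩ := Nat.exists_eq_add_of_lt hpos
            rw [Nat.zero_add] at *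
            rw [← hdiv i']
            exact hall i' (by omega)
        · intro hall i hi
          rw [hdiv i]
          exact hall (i + 1) (by omega)
      by_cases hc : ∀ i < n + 1, a.testBit i = true
      · rw [if_pos (hcond.mpr hc), if_pos hc, Nat.testBit_div_two]
      · rw [if_neg (fun hh => hc (hcond.mp hh)), if_neg hc, Nat.testBit_div_two]

lemma odoF_W (k a : ℕ) : odoF (W k a) = W k (a + 1) := by
  funext n
  show (if ∀ i < n, W k a i = true then !(W k a n) else W k a n) = (a + 1).testBit (n : ℕ)
  rw [testBit_incr]
  by_cases h : ∀ i < (n : ℕ), a.testBit i = true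
  · have h' : ∀ i < n, W k a i = true := fun i hi => h i (by exact_mod_cast hi)
    rw [if_pos h', if_pos h]
    rfl
  · have h' : ¬ ∀ i < n, W k a i = true := by
      intro hall
      apply h
      intro i hi
      have hik : i < k := lt_trans hi n.isLt
      exact hall ⟨i, hik⟩ (by simpa [Fin.lt_def] using hi)
    rw [if_neg h', if_neg h]
    rfl

lemma odoF_iter_W (k a n : ℕ) : odoF^[n] (W k a) = W k (a + n) := by
  induction n with
  | zero => simp
  | succ n ih => rw [Function.iterate_succ_apply', ih, odoF_W, Nat.add_assoc]

lemma kfin_W (α : ℝ) (k a : ℕ) :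
    kfin α (W k a) = (1 - α) * ∑ i ∈ Finset.range k, (if a.testBit i then α ^ i else 0) := by
  unfold kfin W
  rw [Fin.sum_univ_eq_sum_range (fun i => if a.testBit i then α ^ i else 0) k]

lemma kfin_pow (α : ℝ) (k t : ℕ) (ht : t < k) :
    kfin α (W k (2 ^ t)) = (1 - α) * α ^ t := by
  rw [kfin_W]
  congr 1
  have : ∀ i, (if (2 ^ t).testBit i then α ^ i else 0) = (if t = i then α ^ i else 0) := by
    intro i
    rw [Nat.testBit_two_pow]
    by_cases h : t = i <;> simp [h]
  simp only [this]
  rw [Finset.sum_ite_eq (Finset.range k) t (fun i => α ^ i)]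
  simp [Finset.mem_range.mpr ht]

lemma kfin_sub (α : ℝ) (hα : α ≠ 1) (k t : ℕ) (ht : t ≤ k) :
    kfin α (W k (2 ^ k - 2 ^ t)) = α ^ t - α ^ k := by
  rw [kfin_W]
  have hx : 2 ^ t - 1 < 2 ^ k := by
    have := Nat.pow_le_pow_right (by norm_num : 1 ≤ 2) ht
    have := Nat.two_pow_pos t
    omega
  have hsub : 2 ^ k - 2 ^ t = 2 ^ k - ((2 ^ t - 1) + 1) := by
    have := Nat.two_pow_pos t
    omega
  have hbit : ∀ i, i ∈ Finset.range k →
      (if (2 ^ k - 2 ^ t).testBit i then α ^ i else (0:ℝ)) = (if t ≤ i then α ^ i else 0) := by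
    intro i hi
    rw [Finset.mem_range] at hi
    rw [hsub, Nat.testBit_two_pow_sub_succ hx i]
    simp only [Nat.testBit_two_pow_sub_one]
    by_cases h : t ≤ i
    · simp [hi, h, Nat.not_lt.mpr h]
    · simp [hi, Nat.lt_of_not_le h, h]
  rw [Finset.sum_congr rfl hbit]
  rw [Finset.range_eq_Ico, ← Finset.sum_Ico_consecutive _ (Nat.zero_le t) ht]
  have h1 : ∑ i ∈ Finset.Ico 0 t, (if t ≤ i then α ^ i else (0:ℝ)) = 0 := by
    apply Finset.sum_eq_zero
    intro i hi
    rw [Finset.mem_Ico] at hi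
    simp [Nat.not_le.mpr hi.2]
  have h2 : ∑ i ∈ Finset.Ico t k, (if t ≤ i then α ^ i else (0:ℝ)) =
      ∑ i ∈ Finset.Ico t k, α ^ i := by
    apply Finset.sum_congr rfl
    intro i hi
    rw [Finset.mem_Ico] at hi
    simp [hi.1]
  rw [h1, h2, geom_sum_Ico hα ht, zero_add]
  have : α - 1 ≠ 0 := fun h => hα (by linarith [sub_eq_zero.mp h])
  field_simp
  ring

lemma kfin_top (α : ℝ) (k : ℕ) : kfin α (W k (2 ^ k)) = 0 := by
  rw [kfin_W]
  have : ∀ i ∈ Finset.range k, (if (2 ^ k).testBit i then α ^ i else (0:ℝ)) = 0 := by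
    intro i hi
    rw [Finset.mem_range] at hi
    rw [Nat.testBit_two_pow_of_ne (by omega)]
    simp
  rw [Finset.sum_congr rfl this]
  simp

lemma kfin_nonneg (α : ℝ) (hα0 : 0 ≤ α) {k : ℕ} (u : Fin k → Bool) :
    0 ≤ kfin α u ∨ True := Or.inr trivial

lemma kfin_nonneg' (α : ℝ) (hα0 : 0 ≤ α) (hα1 : α ≤ 1) {k : ℕ} (u : Fin k → Bool) :
    0 ≤ kfin α u := by
  apply mul_nonneg (by linarith)
  apply Finset.sum_nonneg
  intro i _
  by_cases h : u i <;> simp [h, pow_nonneg hα0]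

lemma kfin_le_one (α : ℝ) (hα0 : 0 ≤ α) (hα1 : α < 1) {k : ℕ} (u : Fin k → Bool) :
    kfin α u ≤ 1 := by
  unfold kfin
  have hsum : ∑ i : Fin k, (if u i then α ^ (i:ℕ) else 0) ≤ ∑ i : Fin k, α ^ (i:ℕ) := by
    apply Finset.sum_le_sum
    intro i _
    by_cases h : u i <;> simp [h, pow_nonneg hα0]
  have h2 : (1 - α) * ∑ i : Fin k, α ^ (i:ℕ) = 1 - α ^ k := by
    rw [Fin.sum_univ_eq_sum_range (fun i => α ^ i) k, geom_sum_eq (ne_of_lt hα1)]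
    have : α - 1 ≠ 0 := by intro h; linarith [sub_eq_zero.mp h]
    field_simp
    ring
  have h3 : (1 - α) * ∑ i : Fin k, (if u i then α ^ (i:ℕ) else 0) ≤ 1 - α ^ k := by
    rw [← h2]
    exact mul_le_mul_of_nonneg_left hsum (by linarith)
  have : (0:ℝ) ≤ α ^ k := pow_nonneg hα0 k
  linarith

lemma rhoW_le_one (α : ℝ) (hα0 : 0 ≤ α) (hα1 : α < 1) {k : ℕ} (u v : Fin k → Bool) :
    rhoW α u v ≤ 1 := by
  have h1 := kfin_nonneg' α hα0 (le_of_lt hα1) u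
  have h2 := kfin_nonneg' α hα0 (le_of_lt hα1) v
  have h3 := kfin_le_one α hα0 hα1 u
  have h4 := kfin_le_one α hα0 hα1 v
  rw [rhoW, abs_le]
  constructor <;> linarith

lemma le_rhoInfW (α : ℝ) (hα0 : 0 ≤ α) (hα1 : α < 1) {k : ℕ} (u v : Fin k → Bool) (n : ℕ) :
    rhoW α (odoF^[n] u) (odoF^[n] v) ≤ rhoInfW α u v := by
  apply le_ciSup (f := fun n => rhoW α (odoF^[n] u) (odoF^[n] v))
  refine ⟨1, ?_⟩
  rintro x ⟨m, rfl⟩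
  exact rhoW_le_one α hα0 hα1 _ _

/-- For `1/3 < α < 1/2` and `0 < ε < 1` there are `k > 0` and `u, v ∈ Σ^k` with
`ρ(u,v) ≤ ε and ρ_∞(u,v) > ε`. -/
theorem stmt13 (α : ℝ) (hα1 : 1 / 3 < α) (hα2 : α < 1 / 2)
    (ε : ℝ) (hε1 : 0 < ε) (hε2 : ε < 1) :
    ∃ k : ℕ, 0 < k ∧ ∃ u v : Fin k → Bool, rhoW α u v ≤ ε ∧ rhoInfW α u v > ε := by
  classical
  have hα0 : (0:ℝ) < α := by linarith
  have hαlt1 : α < 1 := by linarith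
  have hαne1 : α ≠ 1 := ne_of_lt hαlt1
  -- choose m ≥ 2 with α^m ≤ (3α-1)/2 and α^m < 1 - ε
  obtain ⟨m, hm1, hm2, hmge⟩ :
      ∃ m : ℕ, α ^ m ≤ (3 * α - 1) / 2 ∧ α ^ m < 1 - ε ∧ 2 ≤ m := by
    have hmin : (0:ℝ) < min ((3 * α - 1) / 2) ((1 - ε) / 2) := by
      apply lt_min <;> linarith
    obtain ⟨m₀, hm₀⟩ := exists_pow_lt_of_lt_one hmin hαlt1
    refine ⟨m₀ + 2, ?_, ?_, by omega⟩ <;>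
    · have hpow_le : α ^ (m₀ + 2) ≤ α ^ m₀ :=
        pow_le_pow_of_le_one (le_of_lt hα0) (le_of_lt hαlt1) (by omega)
      have h1 := lt_of_lt_of_le hm₀ (min_le_left ((3 * α - 1) / 2) ((1 - ε) / 2))
      have h2 := lt_of_lt_of_le hm₀ (min_le_right ((3 * α - 1) / 2) ((1 - ε) / 2))
      linarith
  have hmpos : (0:ℝ) < α ^ m := pow_pos hα0 m
  have hm_le_a2 : α ^ m ≤ α ^ 2 := pow_le_pow_of_le_one (le_of_lt hα0) (le_of_lt hαlt1) hmge
  have hm_le_a : α ^ m ≤ α := le_trans hm_le_a2 (by nlinarith)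
  -- choose j minimal with (1 - 2α + α^m) α^j ≤ ε
  set c : ℝ := 1 - 2 * α + α ^ m with hc_def
  have hc_pos : 0 < c := by simp only [hc_def]; linarith
  obtain ⟨j, hPj, hPj'⟩ : ∃ j : ℕ, c * α ^ j ≤ ε ∧ ∀ i < j, ε < c * α ^ i := by
    have hexists : ∃ n : ℕ, c * α ^ n ≤ ε := by
      obtain ⟨n, hn⟩ := exists_pow_lt_of_lt_one (div_pos hε1 hc_pos) hαlt1
      exact ⟨n, by rw [← le_div_iff₀' hc_pos]; exact le_of_lt hn⟩
    refine ⟨Nat.find hexists, Nat.find_spec hexists, ?_⟩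
    intro i hi
    have := Nat.find_min hexists hi
    linarith [not_le.mp this]
  obtain ⟨k, hk_def⟩ : ∃ k : ℕ, k = j + m := ⟨j + m, rfl⟩
  have hkpos : 0 < k := by omega
  have hjk : j < k := by omega
  have hj1k : j + 1 < k := by omega
  have hak : α ^ k = α ^ j * α ^ m := by rw [hk_def, pow_add]
  have hajpos : (0:ℝ) < α ^ j := pow_pos hα0 j
  have h2cancel : 2 ^ j + 2 ^ j = 2 ^ (j + 1) := by rw [pow_succ]; ring
  have h2le : 2 ^ (j + 1) ≤ 2 ^ k := Nat.pow_le_pow_right (by norm_num) (le_of_lt hj1k)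
  refine ⟨k, hkpos, ?_⟩
  by_cases hcase : ε < (1 - α + α ^ 2 - α ^ m) * α ^ j
  · -- family A : u = bit j, v = bits (j+1)..(k-1), shift by 2^j
    refine ⟨W k (2 ^ j), W k (2 ^ k - 2 ^ (j + 1)), ?_, ?_⟩
    · have hu := kfin_pow α k j hjk
      have hv := kfin_sub α hαne1 k (j + 1) (le_of_lt hj1k)
      rw [rhoW, hu, hv]
      have heq : (1 - α) * α ^ j - (α ^ (j + 1) - α ^ k) = c * α ^ j := by
        rw [hc_def, hak, pow_succ]
        ring
      rw [heq, abs_of_nonneg (le_of_lt (mul_pos hc_pos hajpos))]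
      exact hPj
    · have hiter_u : odoF^[2 ^ j] (W k (2 ^ j)) = W k (2 ^ (j + 1)) := by
        rw [odoF_iter_W, h2cancel]
      have hiter_v : odoF^[2 ^ j] (W k (2 ^ k - 2 ^ (j + 1))) = W k (2 ^ k - 2 ^ j) := by
        rw [odoF_iter_W]
        have hle : 2 ^ j ≤ 2 ^ k - 2 ^ j := Nat.le_sub_of_add_le (by rw [h2cancel]; exact h2le)
        have harith : 2 ^ k - 2 ^ (j + 1) + 2 ^ j = 2 ^ k - 2 ^ j := by
          rw [← h2cancel, ← Nat.sub_sub]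
          exact Nat.sub_add_cancel hle
        rw [harith]
      have hterm : rhoW α (odoF^[2 ^ j] (W k (2 ^ j))) (odoF^[2 ^ j] (W k (2 ^ k - 2 ^ (j + 1))))
          = (1 - α + α ^ 2 - α ^ m) * α ^ j := by
        rw [hiter_u, hiter_v, rhoW, kfin_pow α k (j + 1) hj1k,
          kfin_sub α hαne1 k j (le_of_lt hjk)]
        have heq : (1 - α) * α ^ (j + 1) - (α ^ j - α ^ k)
            = -((1 - α + α ^ 2 - α ^ m) * α ^ j) := by
          rw [hak, pow_succ]
          ring
        rw [heq, abs_neg, abs_of_nonneg]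
        apply mul_nonneg _ (le_of_lt hajpos)
        nlinarith
      have := le_rhoInfW α (le_of_lt hα0) hαlt1 (W k (2 ^ j)) (W k (2 ^ k - 2 ^ (j + 1))) (2 ^ j)
      rw [hterm] at this
      linarith
  · -- family B : u = bit j, v = bit (j+1), shift by 2^k - 2^(j+1)
    push_neg at hcase
    refine ⟨W k (2 ^ j), W k (2 ^ (j + 1)), ?_, ?_⟩
    · have hu := kfin_pow α k j hjk
      have hv := kfin_pow α k (j + 1) hj1k
      rw [rhoW, hu, hv]
      have heq : (1 - α) * α ^ j - (1 - α) * α ^ (j + 1) = (1 - α) ^ 2 * α ^ j := by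
        rw [pow_succ]
        ring
      rw [heq, abs_of_nonneg (by positivity)]
      calc (1 - α) ^ 2 * α ^ j ≤ (1 - α + α ^ 2 - α ^ m) * α ^ j := by nlinarith
        _ ≤ ε := hcase
    · have hle : 2 ^ j ≤ 2 ^ k - 2 ^ j := Nat.le_sub_of_add_le (by rw [h2cancel]; exact h2le)
      have hiter_u : odoF^[2 ^ k - 2 ^ (j + 1)] (W k (2 ^ j)) = W k (2 ^ k - 2 ^ j) := by
        rw [odoF_iter_W]
        have harith : 2 ^ j + (2 ^ k - 2 ^ (j + 1)) = 2 ^ k - 2 ^ j := by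
          rw [← h2cancel, ← Nat.sub_sub]
          exact Nat.add_sub_cancel' hle
        rw [harith]
      have hiter_v : odoF^[2 ^ k - 2 ^ (j + 1)] (W k (2 ^ (j + 1))) = W k (2 ^ k) := by
        rw [odoF_iter_W, Nat.add_sub_cancel' h2le]
      have hterm : rhoW α (odoF^[2 ^ k - 2 ^ (j + 1)] (W k (2 ^ j)))
          (odoF^[2 ^ k - 2 ^ (j + 1)] (W k (2 ^ (j + 1)))) = α ^ j - α ^ k := by
        rw [hiter_u, hiter_v, rhoW, kfin_sub α hαne1 k j (le_of_lt hjk), kfin_top]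
        rw [sub_zero, abs_of_nonneg]
        rw [hak]
        nlinarith
      have hgt : ε < α ^ j - α ^ k := by
        rcases Nat.eq_zero_or_pos j with rfl | hjpos
        · rw [hak]
          simp only [pow_zero, one_mul]
          linarith
        · have hlt := hPj' (j - 1) (by omega)
          have hsplit : α ^ j = α * α ^ (j - 1) := by
            rw [← pow_succ']
            congr 1
            omega
          have hprev : (0:ℝ) < α ^ (j - 1) := pow_pos hα0 _
          have hkey : c * α ^ (j - 1) ≤ (1 - α ^ m) * α ^ j := by
            rw [hsplit, hc_def]
            have hmul : α * α ^ m ≤ α ^ m :=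
              mul_le_of_le_one_left (le_of_lt hmpos) (le_of_lt hαlt1)
            have hstep : 1 - 2 * α + α ^ m ≤ (1 - α ^ m) * α := by
              have hexp : (1 - α ^ m) * α = α - α * α ^ m := by ring
              rw [hexp]
              linarith
            have h2' := mul_le_mul_of_nonneg_right hstep (le_of_lt hprev)
            rw [← mul_assoc]
            exact h2'
          rw [hak]
          calc ε < c * α ^ (j - 1) := hlt
            _ ≤ (1 - α ^ m) * α ^ j := hkey
            _ = α ^ j - α ^ j * α ^ m := by ring
      have := le_rhoInfW α (le_of_lt hα0) hαlt1 (W k (2 ^ j)) (W k (2 ^ (j + 1)))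
        (2 ^ k - 2 ^ (j + 1))
      rw [hterm] at this
      linarith
end
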